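/- Let X be a nonnegative random variable with E[X] ∈ (0,∞), α ∈ (0,1), and Y a nonnegative random variable with E[e^{-uY}] = E[e^{-(Γ(1-α)/α) u^α X}] for all u ≥ 0. Then E[Y^α] = +∞. -/

import Mathlib

open MeasureTheory Real Set Filter Topology

private lemma one_sub_exp_neg_nonneg {t : ℝ} (ht : 0 ≤ t) : 0 ≤ 1 - Real.exp (-t) := by
  have : Real.exp (-t) ≤ Real.exp 0 := Real.exp_le_exp.mpr (by linarith)
  rw [Real.exp_zero] at this; linarith

private lemma one_sub_exp_neg_le (t : ℝ) : 1 - Real.exp (-t) ≤ t := by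
  have := Real.add_one_le_exp (-t); linarith

private lemma one_sub_exp_neg_le_rpow {t β : ℝ} (ht : 0 ≤ t) (hβ0 : 0 ≤ β) (hβ1 : β ≤ 1) :
    1 - Real.exp (-t) ≤ t ^ β := by
  rcases eq_or_lt_of_le ht with h | h
  · rw [← h, neg_zero, Real.exp_zero, sub_self]
    exact Real.rpow_nonneg le_rfl β
  rcases le_or_gt t 1 with h1 | h1
  · calc 1 - Real.exp (-t) ≤ t := one_sub_exp_neg_le t
    _ = t ^ (1:ℝ) := (Real.rpow_one t).symm
    _ ≤ t ^ β := Real.rpow_le_rpow_of_exponent_ge h h1 hβ1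
  · have ha : 1 - Real.exp (-t) ≤ 1 := by
      have := Real.exp_nonneg (-t); linarith
    have hb : (1:ℝ) ≤ t ^ β := Real.one_le_rpow h1.le hβ0
    linarith

theorem stmt3 {Ω : Type*} [MeasurableSpace Ω] (P : Measure Ω) [IsProbabilityMeasure P]
    (X Y : Ω → ℝ) (hXm : Measurable X) (hYm : Measurable Y)
    (hX : ∀ ω, 0 ≤ X ω) (hY : ∀ ω, 0 ≤ Y ω)
    (hXint : Integrable X P) (hXpos : 0 < ∫ ω, X ω ∂P)
    (α : ℝ) (hα : α ∈ Set.Ioo (0:ℝ) 1)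
    (hLap : ∀ u : ℝ, 0 ≤ u →
      ∫ ω, Real.exp (-(u * Y ω)) ∂P
        = ∫ ω, Real.exp (-(Real.Gamma (1 - α) / α * u ^ α * X ω)) ∂P) :
    ∫⁻ ω, ENNReal.ofReal (Y ω ^ α) ∂P = ⊤ := by
  obtain ⟨hα0, hα1⟩ := hα
  by_contra hfin
  set c : ℝ := Real.Gamma (1 - α) / α with hc
  have hcpos : 0 < c := div_pos (Real.Gamma_pos_of_pos (by linarith)) hα0
  -- integrability of Y ^ α
  have hYα_meas : Measurable fun ω => Y ω ^ α := by fun_prop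
  have hYα_int : Integrable (fun ω => Y ω ^ α) P := by
    refine ⟨hYα_meas.aestronglyMeasurable, ?_⟩
    rw [hasFiniteIntegral_iff_ofReal (Filter.Eventually.of_forall fun ω =>
      Real.rpow_nonneg (hY ω) α)]
    exact lt_top_iff_ne_top.mpr hfin
  -- the sequences
  set v : ℕ → ℝ := fun n => 1 / (n + 1) with hvdef
  have hvpos : ∀ n, 0 < v n := fun n => by positivity
  have hv0 : Tendsto v atTop (𝓝 0) := tendsto_one_div_add_atTop_nhds_zero_nat
  set u : ℕ → ℝ := fun n => v n ^ (1 / α) with hudef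
  have hupos : ∀ n, 0 < u n := fun n => Real.rpow_pos_of_pos (hvpos n) _
  have huv : ∀ n, u n ^ α = v n := fun n => by
    show (v n ^ (1 / α)) ^ α = v n
    rw [← Real.rpow_mul (hvpos n).le, one_div_mul_cancel hα0.ne', Real.rpow_one]
  -- integrability of bounded exponential terms
  have hexp_int : ∀ (f : Ω → ℝ), Measurable f → (∀ ω, 0 ≤ f ω) →
      Integrable (fun ω => Real.exp (-(f ω))) P := by
    intro f hf hf0
    refine (integrable_const (1 : ℝ)).mono'
      ((Real.measurable_exp.comp hf.neg).aestronglyMeasurable)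
      (Filter.Eventually.of_forall fun ω => ?_)
    rw [Real.norm_eq_abs, abs_of_nonneg (Real.exp_nonneg _)]
    have : Real.exp (-(f ω)) ≤ Real.exp 0 := Real.exp_le_exp.mpr (by linarith [hf0 ω])
    simpa using this
  have hYexp_int : ∀ n, Integrable (fun ω => Real.exp (-(u n * Y ω))) P := fun n =>
    hexp_int _ (measurable_const.mul hYm) fun ω => mul_nonneg (hupos n).le (hY ω)
  have hXexp_int : ∀ n, Integrable (fun ω => Real.exp (-(c * v n * X ω))) P := fun n =>
    hexp_int _ (measurable_const.mul hXm) fun ω =>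
      mul_nonneg (mul_nonneg hcpos.le (hvpos n).le) (hX ω)
  -- equality of the two sequences of integrals
  have key : ∀ n, ∫ ω, (1 - Real.exp (-(u n * Y ω))) / v n ∂P
      = ∫ ω, (1 - Real.exp (-(c * v n * X ω))) / v n ∂P := by
    intro n
    rw [integral_div, integral_div]
    congr 1
    rw [integral_sub (integrable_const 1) (hYexp_int n),
      integral_sub (integrable_const 1) (hXexp_int n)]
    congr 1
    have := hLap (u n) (hupos n).le
    rw [huv n] at this
    exact this
  -- limit of LHS is 0
  have hA : Tendsto (fun n => ∫ ω, (1 - Real.exp (-(u n * Y ω))) / v n ∂P) atTop (𝓝 0) := by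
    have h := MeasureTheory.tendsto_integral_filter_of_dominated_convergence
      (μ := P) (F := fun n ω => (1 - Real.exp (-(u n * Y ω))) / v n)
      (f := fun _ => (0 : ℝ)) (bound := fun ω => Y ω ^ α)
      (Filter.Eventually.of_forall fun n =>
        ((measurable_const.sub (Real.measurable_exp.comp
          (measurable_const.mul hYm).neg)).div_const _).aestronglyMeasurable)
      (Filter.Eventually.of_forall fun n => Filter.Eventually.of_forall fun ω => by
        have ht : 0 ≤ u n * Y ω := mul_nonneg (hupos n).le (hY ω)
        rw [Real.norm_eq_abs, abs_of_nonneg (div_nonneg (one_sub_exp_neg_nonneg ht) (hvpos n).le)]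
        rw [div_le_iff₀ (hvpos n)]
        calc 1 - Real.exp (-(u n * Y ω)) ≤ (u n * Y ω) ^ α :=
            one_sub_exp_neg_le_rpow ht hα0.le hα1.le
        _ = u n ^ α * Y ω ^ α := Real.mul_rpow (hupos n).le (hY ω)
        _ = Y ω ^ α * v n := by rw [huv n]; ring)
      hYα_int
      (Filter.Eventually.of_forall fun ω => by
        -- squeeze: 0 ≤ (1 - exp(-(u n * Y ω)))/v n ≤ v n ^ (1/α - 1) * Y ω → 0
        have hlim : Tendsto (fun n => v n ^ (1 / α - 1) * Y ω) atTop (𝓝 0) := by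
          have he : (0:ℝ) < 1 / α - 1 := by
            have : 1 < 1 / α := one_lt_one_div hα0 hα1
            linarith
          have h1 : Tendsto (fun n => v n ^ (1 / α - 1)) atTop (𝓝 ((0:ℝ) ^ (1 / α - 1))) :=
            hv0.rpow_const (Or.inr he.le)
          rw [Real.zero_rpow he.ne'] at h1
          simpa using h1.mul_const (Y ω)
        refine squeeze_zero (fun n => div_nonneg (one_sub_exp_neg_nonneg
            (mul_nonneg (hupos n).le (hY ω))) (hvpos n).le) (fun n => ?_) hlim
        rw [div_le_iff₀ (hvpos n)]
        calc 1 - Real.exp (-(u n * Y ω)) ≤ u n * Y ω :=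
            one_sub_exp_neg_le _
        _ = v n ^ (1 / α - 1) * Y ω * v n := by
            rw [Real.rpow_sub (hvpos n), Real.rpow_one]
            show v n ^ (1 / α) * Y ω = _
            rw [div_mul_eq_mul_div, div_mul_cancel₀ _ (hvpos n).ne'])
    simpa using h
  -- limit of RHS is c * E[X]
  have hB : Tendsto (fun n => ∫ ω, (1 - Real.exp (-(c * v n * X ω))) / v n ∂P) atTop
      (𝓝 (∫ ω, c * X ω ∂P)) := by
    refine MeasureTheory.tendsto_integral_filter_of_dominated_convergence
      (μ := P) (F := fun n ω => (1 - Real.exp (-(c * v n * X ω))) / v n)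
      (f := fun ω => c * X ω) (bound := fun ω => c * X ω)
      (Filter.Eventually.of_forall fun n =>
        ((measurable_const.sub (Real.measurable_exp.comp
          (measurable_const.mul hXm).neg)).div_const _).aestronglyMeasurable)
      (Filter.Eventually.of_forall fun n => Filter.Eventually.of_forall fun ω => by
        have ht : 0 ≤ c * v n * X ω := mul_nonneg (mul_nonneg hcpos.le (hvpos n).le) (hX ω)
        rw [Real.norm_eq_abs, abs_of_nonneg (div_nonneg (one_sub_exp_neg_nonneg ht) (hvpos n).le)]
        rw [div_le_iff₀ (hvpos n)]
        calc 1 - Real.exp (-(c * v n * X ω)) ≤ c * v n * X ω := one_sub_exp_neg_le _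
        _ = c * X ω * v n := by ring)
      (hXint.const_mul c)
      (Filter.Eventually.of_forall fun ω => ?_)
    -- pointwise limit via derivative at 0
    have hd : HasDerivAt (fun t : ℝ => 1 - Real.exp (-(c * t * X ω))) (c * X ω) 0 := by
      have h1 : HasDerivAt (fun t : ℝ => -(c * t * X ω)) (-(c * X ω)) 0 := by
        have := (((hasDerivAt_id (0:ℝ)).const_mul c).mul_const (X ω)).fun_neg
        simpa using this
      have h2 : HasDerivAt (fun t : ℝ => Real.exp (-(c * t * X ω))) (Real.exp (-(c * 0 * X ω)) * -(c * X ω)) 0 := h1.exp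
      have h3 := h2.const_sub 1
      convert h3 using 1 <;> first | rfl | simp
    have hslope := hasDerivAt_iff_tendsto_slope.mp hd
    have hvne : Tendsto v atTop (𝓝[≠] (0:ℝ)) :=
      tendsto_nhdsWithin_of_tendsto_nhds_of_eventually_within v hv0
        (Filter.Eventually.of_forall fun n => (hvpos n).ne')
    have := hslope.comp hvne
    refine this.congr fun n => ?_
    simp [slope_def_field, Function.comp]
  -- conclude
  rw [funext key] at hA
  have h0 : (0:ℝ) = ∫ ω, c * X ω ∂P := tendsto_nhds_unique hA hB
  rw [integral_const_mul] at h0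
  exact absurd h0.symm (ne_of_gt (mul_pos hcpos hXpos))
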